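/- arXiv:2010.15651 — 4 statements merged into one kernel-verified Lean document; each statement's English description precedes it below -/
import Mathlib

section
/- For the ratio of softmax weights of a perturbed point to a clean point: if the clean points are all at the origin and the m perturbed points are all at p·e_1 with p > 0, then ŝ_pert / ŝ_clean = exp(−((n−m) − m)·p / T), and hence if m < n − m this ratio tends to 0 as p → ∞. -/
open scoped BigOperators
open Filter Topology

/-- Point-mass perturbation: with `n - m` clean points at the origin and `m` perturbed
points at `p • e₁`, the ratio of the softmax weight of a perturbed point to that of a clean
point equals `exp(-((n-m) - m) p / T)`, and hence tends to `0` as `p → ∞` when `m < n - m`. -/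
theorem soft_medoid_weight_ratio_point_mass (n m d : ℕ) (hd : 0 < d) (hm : 0 < m)
    (hmn : m < n) (T : ℝ) (hT : 0 < T)
    (xt : ℝ → Fin n → EuclideanSpace ℝ (Fin d))
    (hxt : ∀ (p : ℝ) (i : Fin n), xt p i =
      if (i : ℕ) < m then p • EuclideanSpace.single (⟨0, hd⟩ : Fin d) (1 : ℝ) else 0)
    (s : ℝ → Fin n → ℝ)
    (hs : ∀ (p : ℝ) (i : Fin n), s p i =
      Real.exp (-(1 / T) * ∑ j, ‖xt p j - xt p i‖) /
        ∑ q, Real.exp (-(1 / T) * ∑ j, ‖xt p j - xt p q‖))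
    (i h : Fin n) (hi : (i : ℕ) < m) (hh : m ≤ (h : ℕ)) :
    (∀ p : ℝ, 0 < p →
      s p i / s p h = Real.exp (-(((n : ℝ) - m) - m) * p / T)) ∧
    (m < n - m → Tendsto (fun p : ℝ => s p i / s p h) atTop (𝓝 0)) := by
  have hcard : (Finset.univ.filter (fun j : Fin n => (j : ℕ) < m)).card = m := by
    rw [Finset.card_filter]
    rw [Fin.sum_univ_eq_sum_range (fun j => if j < m then 1 else 0)]
    rw [← Finset.card_filter]
    have : Finset.filter (fun x => x < m) (Finset.range n) = Finset.range m := by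
      ext x; simp; omega
    simp [this]
  have hcard' : (Finset.univ.filter (fun j : Fin n => ¬ (j : ℕ) < m)).card = n - m := by
    have := Finset.card_filter_add_card_filter_not
      (s := (Finset.univ : Finset (Fin n))) (p := fun j : Fin n => (j : ℕ) < m)
    simp only [Finset.card_univ, Fintype.card_fin, hcard] at this
    omega
  have hsum : ∀ p : ℝ, 0 < p → ∀ q : Fin n, (∑ j, ‖xt p j - xt p q‖) =
      if (q : ℕ) < m then ((n : ℝ) - m) * p else (m : ℝ) * p := by
    intro p hp q
    have hv : ‖p • EuclideanSpace.single (⟨0, hd⟩ : Fin d) (1 : ℝ)‖ = p := by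
      rw [norm_smul, EuclideanSpace.norm_single]
      simp [abs_of_pos hp]
    have hterm : ∀ j : Fin n, ‖xt p j - xt p q‖ =
        if ((j : ℕ) < m ↔ (q : ℕ) < m) then 0 else p := by
      intro j
      rw [hxt, hxt]
      by_cases hj : (j : ℕ) < m <;> by_cases hq : (q : ℕ) < m <;>
        simp [hj, hq, hv, zero_sub, norm_neg]
    rw [Finset.sum_congr rfl (fun j _ => hterm j)]
    by_cases hq : (q : ℕ) < m
    · simp only [hq, iff_true, if_true]
      rw [Finset.sum_ite, Finset.sum_const, Finset.sum_const, hcard']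
      have : ((n - m : ℕ) : ℝ) = (n : ℝ) - m := by
        push_cast [Nat.cast_sub hmn.le]; ring
      simp [this]
    · simp only [hq, iff_false, if_false]
      have : ∀ j : Fin n, (if ¬ (j : ℕ) < m then (0 : ℝ) else p)
          = if (j : ℕ) < m then p else 0 := by
        intro j; by_cases hj : (j : ℕ) < m <;> simp [hj]
      rw [Finset.sum_congr rfl (fun j _ => this j)]
      rw [Finset.sum_ite, Finset.sum_const, Finset.sum_const, hcard]
      simp
  have hmain : ∀ p : ℝ, 0 < p →
      s p i / s p h = Real.exp (-(((n : ℝ) - m) - m) * p / T) := by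
    intro p hp
    rw [hs, hs]
    have hD : (0 : ℝ) < ∑ q, Real.exp (-(1 / T) * ∑ j, ‖xt p j - xt p q‖) :=
      Finset.sum_pos (fun q _ => Real.exp_pos _) ⟨i, Finset.mem_univ i⟩
    rw [div_div_div_comm, div_self hD.ne', div_one]
    rw [← Real.exp_sub]
    congr 1
    rw [hsum p hp i, hsum p hp h]
    simp only [hi, if_true, if_neg (not_lt.mpr hh)]
    field_simp
    ring
  refine ⟨hmain, fun hlt => ?_⟩
  have hc : 0 < ((n : ℝ) - m) - m := by
    have h2 : 2 * m + 1 ≤ n := by omega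
    have : (2 * m + 1 : ℝ) ≤ n := by exact_mod_cast h2
    linarith
  have htend : Tendsto (fun p : ℝ => Real.exp (-(((n : ℝ) - m) - m) * p / T))
      atTop (𝓝 0) := by
    apply Real.tendsto_exp_atBot.comp
    have : Tendsto (fun p : ℝ => (-(((n : ℝ) - m) - m) / T) * p) atTop atBot :=
      Tendsto.const_mul_atTop_of_neg (div_neg_of_neg_of_pos (by linarith) hT) tendsto_id
    exact this.congr (fun p => by ring)
  exact htend.congr' (((eventually_gt_atTop 0).mono (fun p hp => (hmain p hp).symm)))
end

section
/- In the point-mass perturbation setting where m < n − m clean points sit at the origin and m perturbed points sit at p·e_1, the Soft Medoid stays bounded as p → ∞; in fact lim_{p→∞} t_SM(X̃(p)) = 0. -/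
open scoped BigOperators
open Filter Topology

/-- Point-mass perturbation with `2m < n`: the Soft Medoid stays bounded as `p → ∞`;
in fact it tends to `0`. -/
theorem soft_medoid_point_mass_tendsto_zero (n m d : ℕ) (hd : 0 < d) (hmn : 2 * m < n)
    (T : ℝ) (hT : 0 < T)
    (xt : ℝ → Fin n → EuclideanSpace ℝ (Fin d))
    (hxt : ∀ (p : ℝ) (i : Fin n), xt p i =
      if (i : ℕ) < m then p • EuclideanSpace.single (⟨0, hd⟩ : Fin d) (1 : ℝ) else 0)
    (s : ℝ → Fin n → ℝ)
    (hs : ∀ (p : ℝ) (i : Fin n), s p i =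
      Real.exp (-(1 / T) * ∑ j, ‖xt p j - xt p i‖) /
        ∑ q, Real.exp (-(1 / T) * ∑ j, ‖xt p j - xt p q‖)) :
    Tendsto (fun p : ℝ => ∑ i, s p i • xt p i) atTop (𝓝 0) := by
  have hmln : m < n := by omega
  set v : EuclideanSpace ℝ (Fin d) := EuclideanSpace.single (⟨0, hd⟩ : Fin d) (1 : ℝ) with hv
  have hnormv : ‖v‖ = 1 := by
    rw [hv, EuclideanSpace.norm_single]; norm_num
  have hcard : (Finset.univ.filter (fun j : Fin n => (j : ℕ) < m)).card = m := by
    have h1 : (Finset.univ.filter (fun j : Fin n => (j : ℕ) < m)) =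
        (Finset.range m).attachFin (fun x hx => lt_trans (Finset.mem_range.mp hx) hmln) := by
      ext j
      simp [Finset.mem_attachFin]
    rw [h1, Finset.card_attachFin, Finset.card_range]
  have hcard' : (Finset.univ.filter (fun j : Fin n => ¬ (j : ℕ) < m)).card = n - m := by
    have := Finset.card_filter_add_card_filter_not
      (s := (Finset.univ : Finset (Fin n))) (p := fun j : Fin n => (j : ℕ) < m)
    rw [hcard, Finset.card_univ, Fintype.card_fin] at this
    omega
  set c : ℝ := ((n : ℝ) - 2 * m) / T with hc
  have hcpos : 0 < c := by
    apply div_pos _ hT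
    have : (2 * m : ℝ) < n := by exact_mod_cast hmn
    linarith
  -- scalar function
  set g : ℝ → ℝ := fun p =>
    (m : ℝ) * p * Real.exp (-c * p) /
      ((m : ℝ) * Real.exp (-c * p) + ((n : ℝ) - m)) with hg
  have key : ∀ p : ℝ, 0 ≤ p → (∑ i, s p i • xt p i) = g p • v := by
    intro p hp
    have hpv : ‖p • v‖ = p := by
      rw [norm_smul, hnormv, mul_one, Real.norm_eq_abs, abs_of_nonneg hp]
    -- the distance sums
    have hdist : ∀ i : Fin n, (∑ j, ‖xt p j - xt p i‖) =
        if (i : ℕ) < m then ((n : ℝ) - m) * p else (m : ℝ) * p := by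
      intro i
      by_cases hi : (i : ℕ) < m
      · rw [if_pos hi]
        have hterm : ∀ j : Fin n, ‖xt p j - xt p i‖ = if (j : ℕ) < m then 0 else p := by
          intro j
          rw [hxt, hxt, if_pos hi]
          by_cases hj : (j : ℕ) < m
          · rw [if_pos hj, if_pos hj, sub_self, norm_zero]
          · rw [if_neg hj, if_neg hj, zero_sub, norm_neg, hpv]
        rw [Finset.sum_congr rfl (fun j _ => hterm j), Finset.sum_ite,
          Finset.sum_const, Finset.sum_const, hcard, hcard']
        have : ((n - m : ℕ) : ℝ) = (n : ℝ) - m := by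
          push_cast [Nat.cast_sub hmln.le]; ring
        simp [this]
      · rw [if_neg hi]
        have hterm : ∀ j : Fin n, ‖xt p j - xt p i‖ = if (j : ℕ) < m then p else 0 := by
          intro j
          rw [hxt, hxt, if_neg hi]
          by_cases hj : (j : ℕ) < m
          · rw [if_pos hj, if_pos hj, sub_zero, hpv]
          · rw [if_neg hj, if_neg hj, sub_self, norm_zero]
        rw [Finset.sum_congr rfl (fun j _ => hterm j), Finset.sum_ite,
          Finset.sum_const, Finset.sum_const, hcard, hcard']
        simp
    set a : ℝ := Real.exp (-(1 / T) * (((n : ℝ) - m) * p)) with ha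
    set b : ℝ := Real.exp (-(1 / T) * ((m : ℝ) * p)) with hb
    have hD : (∑ q, Real.exp (-(1 / T) * ∑ j, ‖xt p j - xt p q‖)) =
        (m : ℝ) * a + ((n : ℝ) - m) * b := by
      have : ∀ q : Fin n, Real.exp (-(1 / T) * ∑ j, ‖xt p j - xt p q‖) =
          if (q : ℕ) < m then a else b := by
        intro q
        rw [hdist q]
        by_cases hq : (q : ℕ) < m
        · rw [if_pos hq, if_pos hq]
        · rw [if_neg hq, if_neg hq]
      rw [Finset.sum_congr rfl (fun q _ => this q), Finset.sum_ite,
        Finset.sum_const, Finset.sum_const, hcard, hcard']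
      have : ((n - m : ℕ) : ℝ) = (n : ℝ) - m := by
        push_cast [Nat.cast_sub hmln.le]; ring
      simp [this, mul_comm]
    set D : ℝ := (m : ℝ) * a + ((n : ℝ) - m) * b with hDdef
    have hapos : 0 < a := Real.exp_pos _
    have hbpos : 0 < b := Real.exp_pos _
    have hnm : (0 : ℝ) < (n : ℝ) - m := by
      have : (m : ℝ) < n := by exact_mod_cast hmln
      linarith
    have hDpos : 0 < D := by
      have h1 : 0 ≤ (m : ℝ) * a := mul_nonneg (Nat.cast_nonneg m) hapos.le
      have h2 : 0 < ((n : ℝ) - m) * b := mul_pos hnm hbpos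
      rw [hDdef]; linarith
    -- each term of the main sum
    have hterm : ∀ i : Fin n, s p i • xt p i =
        if (i : ℕ) < m then (a / D * p) • v else 0 := by
      intro i
      rw [hs, hdist, hD, hxt]
      by_cases hi : (i : ℕ) < m
      · rw [if_pos hi, if_pos hi, if_pos hi, smul_smul]
      · rw [if_neg hi, if_neg hi, if_neg hi, smul_zero]
    rw [Finset.sum_congr rfl (fun i _ => hterm i), Finset.sum_ite,
      Finset.sum_const, Finset.sum_const, hcard, hcard', smul_zero, add_zero,
      ← Nat.cast_smul_eq_nsmul ℝ, smul_smul]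
    congr 1
    -- scalar identity
    have hab : a = Real.exp (-c * p) * b := by
      rw [ha, hb, ← Real.exp_add]
      congr 1
      rw [hc]
      field_simp
      ring
    rw [hg, hab, hDdef, hab]
    have hden : (m : ℝ) * Real.exp (-c * p) + ((n : ℝ) - m) ≠ 0 := by
      have : 0 ≤ (m : ℝ) * Real.exp (-c * p) :=
        mul_nonneg (Nat.cast_nonneg m) (Real.exp_pos _).le
      positivity
    field_simp
  -- limit of the scalar
  have hgl : Tendsto g atTop (𝓝 0) := by
    have hexp : Tendsto (fun p : ℝ => Real.exp (-c * p)) atTop (𝓝 0) := by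
      have hlin : Tendsto (fun p : ℝ => -c * p) atTop atBot := by
        simpa [neg_mul] using
          (tendsto_neg_atBot_iff.mpr ((tendsto_const_mul_atTop_of_pos hcpos).mpr tendsto_id))
      exact Real.tendsto_exp_atBot.comp hlin
    have hnum : Tendsto (fun p : ℝ => (m : ℝ) * p * Real.exp (-c * p)) atTop (𝓝 0) := by
      have h1 : Tendsto (fun p : ℝ => p * Real.exp (-c * p)) atTop (𝓝 0) := by
        have h2 : Tendsto (fun p : ℝ => (c * p) * Real.exp (-(c * p))) atTop (𝓝 0) := by
          have := (Real.tendsto_pow_mul_exp_neg_atTop_nhds_zero 1).comp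
            ((tendsto_const_mul_atTop_of_pos hcpos).mpr (tendsto_id (α := ℝ)))
          simpa [Function.comp_def] using this
        have h3 := h2.const_mul (1 / c)
        rw [mul_zero] at h3
        refine h3.congr (fun p => ?_)
        have hc0 : c ≠ 0 := ne_of_gt hcpos
        field_simp
      have := h1.const_mul (m : ℝ)
      rw [mul_zero] at this
      refine this.congr (fun p => by ring)
    have hden : Tendsto (fun p : ℝ => (m : ℝ) * Real.exp (-c * p) + ((n : ℝ) - m))
        atTop (𝓝 ((n : ℝ) - m)) := by
      have := (hexp.const_mul (m : ℝ)).add_const ((n : ℝ) - m)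
      simpa using this
    have hnm : ((n : ℝ) - m) ≠ 0 := by
      have : (m : ℝ) < n := by exact_mod_cast hmln
      linarith
    have := hnum.div hden hnm
    rw [zero_div] at this
    exact this
  have hlim : Tendsto (fun p : ℝ => g p • v) atTop (𝓝 0) := by
    have := hgl.smul_const v
    rwa [zero_smul] at this
  exact hlim.congr' ((eventually_ge_atTop 0).mono fun p hp => (key p hp).symm)
end

section
/- Conversely, if the adversary controls at least half the points (m ≥ n − m, i.e., 2m ≥ n), then the Soft Medoid with clean points at the origin and perturbed points at p·e_1 satisfies ‖t_SM(X̃(p))‖ → ∞ as p → ∞. -/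
open scoped BigOperators
open Filter Topology

/-- If the adversary controls at least half of the points (`2m ≥ n`), the Soft Medoid
in the point-mass setting breaks down: `‖t_SM(X̃(p))‖ → ∞` as `p → ∞`. -/
theorem soft_medoid_point_mass_breakdown (n m d : ℕ) (hd : 0 < d) (hn : 0 < n)
    (hnm : n ≤ 2 * m) (hmn : m ≤ n) (T : ℝ) (hT : 0 < T)
    (xt : ℝ → Fin n → EuclideanSpace ℝ (Fin d))
    (hxt : ∀ (p : ℝ) (i : Fin n), xt p i =
      if (i : ℕ) < m then p • EuclideanSpace.single (⟨0, hd⟩ : Fin d) (1 : ℝ) else 0)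
    (s : ℝ → Fin n → ℝ)
    (hs : ∀ (p : ℝ) (i : Fin n), s p i =
      Real.exp (-(1 / T) * ∑ j, ‖xt p j - xt p i‖) /
        ∑ q, Real.exp (-(1 / T) * ∑ j, ‖xt p j - xt p q‖)) :
    Tendsto (fun p : ℝ => ‖∑ i, s p i • xt p i‖) atTop atTop := by
  have hm : 0 < m := by omega
  set e : EuclideanSpace ℝ (Fin d) := EuclideanSpace.single (⟨0, hd⟩ : Fin d) (1 : ℝ) with he
  have hne : ‖e‖ = 1 := by simp [he]
  have hcard : (Finset.univ.filter fun j : Fin n => (j : ℕ) < m).card = m := by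
    have hEq : (Finset.univ.filter fun j : Fin n => (j : ℕ) < m) =
        (Finset.range m).attachFin
          (fun x hx => lt_of_lt_of_le (Finset.mem_range.mp hx) hmn) := by
      ext j; simp [Finset.mem_attachFin]
    rw [hEq, Finset.card_attachFin, Finset.card_range]
  have hcard' : (Finset.univ.filter fun j : Fin n => ¬ (j : ℕ) < m).card = n - m := by
    have h := Finset.card_filter_add_card_filter_not
      (s := (Finset.univ : Finset (Fin n))) (p := fun j : Fin n => (j : ℕ) < m)
    rw [hcard, Finset.card_univ, Fintype.card_fin] at h
    omega
  have key : ∀ p : ℝ, 0 ≤ p → ((m : ℝ) / n) * p ≤ ‖∑ i, s p i • xt p i‖ := by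
    intro p hp
    set A : ℝ := Real.exp (-(1 / T) * (((n - m : ℕ) : ℝ) * p)) with hA
    set B : ℝ := Real.exp (-(1 / T) * ((m : ℝ) * p)) with hB
    have hApos : 0 < A := Real.exp_pos _
    have hBpos : 0 < B := Real.exp_pos _
    set D : ℝ := (m : ℝ) * A + ((n - m : ℕ) : ℝ) * B with hD
    have hDpos : 0 < D := by positivity
    -- distances
    have hdist : ∀ i : Fin n, ∑ j, ‖xt p j - xt p i‖ =
        if (i : ℕ) < m then ((n - m : ℕ) : ℝ) * p else (m : ℝ) * p := by
      intro i
      have hterm : ∀ j : Fin n, ‖xt p j - xt p i‖ =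
          if ((j : ℕ) < m ↔ (i : ℕ) < m) then 0 else p := by
        intro j
        rw [hxt, hxt]
        by_cases hj : (j : ℕ) < m <;> by_cases hi : (i : ℕ) < m <;>
          simp [hj, hi, norm_smul, hne, abs_of_nonneg hp]
      rw [Finset.sum_congr rfl fun j _ => hterm j]
      by_cases hi : (i : ℕ) < m
      · simp only [hi, iff_true]
        rw [Finset.sum_ite, Finset.sum_const, Finset.sum_const, hcard']
        simp [mul_comm]
      · simp only [hi, iff_false]
        rw [Finset.sum_ite, Finset.sum_const, Finset.sum_const]
        have : (Finset.univ.filter fun j : Fin n => ¬ ¬ (j : ℕ) < m).card = m := by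
          simpa using hcard
        rw [this]
        simp [mul_comm]
    -- denominator
    have hden : (∑ q, Real.exp (-(1 / T) * ∑ j, ‖xt p j - xt p q‖)) = D := by
      have : ∀ q : Fin n, Real.exp (-(1 / T) * ∑ j, ‖xt p j - xt p q‖) =
          if (q : ℕ) < m then A else B := by
        intro q
        rw [hdist q]
        by_cases hq : (q : ℕ) < m <;> simp [hq, hA, hB]
      rw [Finset.sum_congr rfl fun q _ => this q, Finset.sum_ite,
        Finset.sum_const, Finset.sum_const, hcard, hcard', hD]
      simp [mul_comm]
    have hsval : ∀ i : Fin n, s p i = (if (i : ℕ) < m then A else B) / D := by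
      intro i
      rw [hs, hden, hdist i]
      by_cases hi : (i : ℕ) < m <;> simp [hi, hA, hB]
    -- the weighted sum
    have hsum : (∑ i, s p i • xt p i) = ((m : ℝ) * (A / D * p)) • e := by
      have hterm : ∀ i : Fin n, s p i • xt p i =
          if (i : ℕ) < m then (A / D * p) • e else 0 := by
        intro i
        rw [hsval i, hxt]
        by_cases hi : (i : ℕ) < m <;> simp [hi, smul_smul]
      rw [Finset.sum_congr rfl fun i _ => hterm i, Finset.sum_ite,
        Finset.sum_const, Finset.sum_const, hcard]
      simp only [Finset.sum_const, smul_zero, add_zero]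
      rw [← Nat.cast_smul_eq_nsmul ℝ, smul_smul]
    have hnorm : ‖∑ i, s p i • xt p i‖ = (m : ℝ) * (A / D * p) := by
      rw [hsum, norm_smul, hne, mul_one, Real.norm_of_nonneg (by positivity)]
    rw [hnorm]
    -- A ≥ B since n - m ≤ m
    have hBA : B ≤ A := by
      apply Real.exp_le_exp.mpr
      have h1 : ((n - m : ℕ) : ℝ) ≤ (m : ℝ) := by
        exact_mod_cast (show n - m ≤ m by omega)
      have h2 := mul_le_mul_of_nonneg_right h1 hp
      have h3 := mul_le_mul_of_nonneg_left h2 (le_of_lt (one_div_pos.mpr hT))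
      linarith
    have hDle : D ≤ (n : ℝ) * A := by
      have h2 : ((n - m : ℕ) : ℝ) * B ≤ ((n - m : ℕ) : ℝ) * A := by
        apply mul_le_mul_of_nonneg_left hBA (by positivity)
      have h3 : (m : ℝ) + ((n - m : ℕ) : ℝ) = (n : ℝ) := by
        push_cast [Nat.cast_sub hmn]; ring
      calc D ≤ (m : ℝ) * A + ((n - m : ℕ) : ℝ) * A := by rw [hD]; linarith
        _ = (n : ℝ) * A := by rw [← h3]; ring
    have hfrac : (m : ℝ) / n ≤ (m : ℝ) * A / D := by
      have hAne : A ≠ 0 := ne_of_gt hApos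
      have : (m : ℝ) / n = (m : ℝ) * A / ((n : ℝ) * A) := by
        rw [mul_div_mul_right _ _ hAne]
      rw [this]
      gcongr
    calc ((m : ℝ) / n) * p ≤ ((m : ℝ) * A / D) * p := by
          apply mul_le_mul_of_nonneg_right hfrac hp
      _ = (m : ℝ) * (A / D * p) := by ring
  have hlin : Tendsto (fun p : ℝ => ((m : ℝ) / n) * p) atTop atTop := by
    apply Tendsto.const_mul_atTop (by positivity) tendsto_id
  refine tendsto_atTop_mono' atTop ?_ hlin
  filter_upwards [eventually_ge_atTop (0 : ℝ)] with p hp using key p hp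
end

section
/- Suppose the location estimate t satisfies ‖t(X̃_ε)‖ ≥ b + 2M with b > 2Mm, where M = max_i ‖x_i‖ over the clean data. Then Σ_{j=1}^n ‖x̃_j − t(X̃_ε)‖ > Σ_{j=1}^n ‖x̃_j‖, where X̃_ε consists of m arbitrary perturbed points and n − m clean points each of norm at most M. -/
open scoped BigOperators

/-- If the location estimate `t` is far away (`‖t‖ ≥ b + 2M` with `b > 2Mm`) from the data,
where the `n - m` clean points have norm at most `M` and `2m < n`, then the total distance
from the data to `t` strictly exceeds the total distance to the origin. -/
theorem far_estimate_total_distance_gt (n m d : ℕ) (M b : ℝ) (hM : 0 ≤ M)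
    (hb : 2 * M * m < b) (hnm : 2 * m < n)
    (xt : Fin n → EuclideanSpace ℝ (Fin d))
    (hclean : ∀ o : Fin n, m ≤ (o : ℕ) → ‖xt o‖ ≤ M)
    (t : EuclideanSpace ℝ (Fin d)) (ht : b + 2 * M ≤ ‖t‖) :
    (∑ j, ‖xt j‖) < ∑ j, ‖xt j - t‖ := by
  have hmn : m ≤ n := by omega
  have key : ∀ j : Fin n,
      ‖xt j‖ + (if (j : ℕ) < m then -‖t‖ else ‖t‖ - 2 * M) ≤ ‖xt j - t‖ := by
    intro j
    by_cases h : (j : ℕ) < m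
    · have h1 := norm_sub_norm_le (xt j) t
      simp only [h, if_true]
      linarith
    · have h1 := hclean j (le_of_not_gt h)
      have h2 := norm_sub_norm_le t (xt j)
      rw [norm_sub_rev] at h2
      simp only [h, if_false]
      linarith
  have hsum := Finset.sum_le_sum (fun j (_ : j ∈ Finset.univ) => key j)
  rw [Finset.sum_add_distrib] at hsum
  have hcard : (Finset.univ.filter fun j : Fin n => (j : ℕ) < m).card = m := by
    have h0 : 0 < n := by omega
    have heq : (Finset.univ.filter fun j : Fin n => (j : ℕ) < m)
        = Finset.Iio (⟨m, by omega⟩ : Fin n) := by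
      ext j; simp [Fin.lt_def]
    rw [heq, Fin.card_Iio]
  have hcard2 : (Finset.univ.filter fun j : Fin n => ¬ (j : ℕ) < m).card = n - m := by
    have := Finset.card_filter_add_card_filter_not
      (s := (Finset.univ : Finset (Fin n))) (p := fun j : Fin n => (j : ℕ) < m)
    simp only [Finset.card_univ, Fintype.card_fin] at this
    omega
  have hf : ∑ j : Fin n, (if (j : ℕ) < m then -‖t‖ else ‖t‖ - 2 * M)
      = (m : ℝ) * (-‖t‖) + ((n : ℝ) - m) * (‖t‖ - 2 * M) := by
    rw [Finset.sum_ite, Finset.sum_const, Finset.sum_const, hcard, hcard2]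
    have : ((n - m : ℕ) : ℝ) = (n : ℝ) - m := by
      push_cast [Nat.cast_sub hmn]; ring
    simp only [nsmul_eq_mul, this]
  rw [hf] at hsum
  have hn2m : (1 : ℝ) ≤ (n : ℝ) - 2 * m := by
    have : (2 * m + 1 : ℕ) ≤ n := by omega
    have h2 : ((2 * m + 1 : ℕ) : ℝ) ≤ (n : ℝ) := Nat.cast_le.mpr this
    push_cast at h2
    linarith
  have hpos : 0 < (m : ℝ) * (-‖t‖) + ((n : ℝ) - m) * (‖t‖ - 2 * M) := by
    have hb0 : (0 : ℝ) ≤ 2 * M * m := by positivity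
    have hTM : (0 : ℝ) ≤ ‖t‖ - 2 * M := by linarith
    have h := mul_le_mul_of_nonneg_right hn2m hTM
    nlinarith
  linarith
end
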